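/- Let Z ~ N(0,1) and V ~ Exp(1) be independent, α > 0, and X = Z + V/α. Then P(X < z) = Φ(z) - exp(α²/2 - αz)·Φ(z - α), and consequently 1 - P(X < z) ~ exp(α²/2 - αz) as z → ∞; hence setting z_n(x) = α/2 + α^{-1} ln(n/x) yields P(X < z_n(x)) = 1 - x/n + o(1/n) as n → ∞, for every fixed x > 0. -/

import Mathlib

open Filter MeasureTheory ProbabilityTheory

/-- The standard normal cumulative distribution function. -/
noncomputable def stdNormCDF (x : ℝ) : ℝ :=
  ((ProbabilityTheory.gaussianReal 0 1) (Set.Iic x)).toReal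

section AuxLemmas

open Real Set Topology

lemma stdNormCDF_eq_integral (z : ℝ) :
    stdNormCDF z = ∫ x in Iic z, gaussianPDFReal 0 1 x := by
  rw [stdNormCDF, gaussianReal_apply_eq_integral 0 one_ne_zero,
    ENNReal.toReal_ofReal]
  exact setIntegral_nonneg measurableSet_Iic fun x _ => gaussianPDFReal_nonneg 0 1 x

lemma stdNormCDF_nonneg (z : ℝ) : 0 ≤ stdNormCDF z := ENNReal.toReal_nonneg

lemma stdNormCDF_le_one (z : ℝ) : stdNormCDF z ≤ 1 := by
  rw [stdNormCDF]
  exact ENNReal.toReal_le_of_le_ofReal zero_le_one (by simpa using prob_le_one)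

lemma exp_mul_gaussianPDFReal (α s : ℝ) :
    Real.exp (α * s) * gaussianPDFReal 0 1 s
      = Real.exp (α ^ 2 / 2) * gaussianPDFReal 0 1 (s - α) := by
  simp only [gaussianPDFReal_def, NNReal.coe_one, mul_one, sub_zero]
  rw [mul_left_comm, ← Real.exp_add, mul_left_comm, ← Real.exp_add]
  ring_nf

lemma integrable_exp_mul_gaussian (α : ℝ) :
    Integrable (fun s => Real.exp (α * s) * gaussianPDFReal 0 1 s) := by
  have : (fun s => Real.exp (α * s) * gaussianPDFReal 0 1 s)
      = fun s => Real.exp (α ^ 2 / 2) * gaussianPDFReal 0 1 (s - α) := by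
    funext s; exact exp_mul_gaussianPDFReal α s
  rw [this]
  exact ((integrable_gaussianPDFReal 0 1).comp_sub_right α).const_mul _

lemma integral_exp_mul_gaussian_Iic (α z : ℝ) :
    ∫ s in Iic z, Real.exp (α * s) * gaussianPDFReal 0 1 s
      = Real.exp (α ^ 2 / 2) * stdNormCDF (z - α) := by
  have h1 : ∫ s in Iic z, Real.exp (α * s) * gaussianPDFReal 0 1 s
      = Real.exp (α ^ 2 / 2) * ∫ s in Iic z, gaussianPDFReal 0 1 (s - α) := by
    rw [← integral_const_mul]
    exact setIntegral_congr_fun measurableSet_Iic fun s _ => exp_mul_gaussianPDFReal α s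
  rw [h1, stdNormCDF_eq_integral]
  congr 1
  have h2 : ∀ x : ℝ, (Iic z).indicator (fun s => gaussianPDFReal 0 1 (s - α)) x
      = (Iic (z - α)).indicator (gaussianPDFReal 0 1) (x - α) := by
    intro x
    simp only [indicator_apply, mem_Iic]
    by_cases hx : x ≤ z
    · rw [if_pos hx, if_pos (by linarith)]
    · rw [if_neg hx, if_neg (by intro h; exact hx (by linarith))]
  rw [← integral_indicator measurableSet_Iic, ← integral_indicator measurableSet_Iic]
  calc ∫ x, (Iic z).indicator (fun s => gaussianPDFReal 0 1 (s - α)) x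
      = ∫ x, (Iic (z - α)).indicator (gaussianPDFReal 0 1) (x - α) := by
        exact integral_congr_ae (ae_of_all _ h2)
    _ = ∫ x, (Iic (z - α)).indicator (gaussianPDFReal 0 1) x :=
        integral_sub_right_eq_self _ α

lemma integral_exp_mul_gaussian (α : ℝ) :
    ∫ s, Real.exp (α * s) * gaussianPDFReal 0 1 s = Real.exp (α ^ 2 / 2) := by
  have : (fun s => Real.exp (α * s) * gaussianPDFReal 0 1 s)
      = fun s => Real.exp (α ^ 2 / 2) * gaussianPDFReal 0 1 (s - α) := by
    funext s; exact exp_mul_gaussianPDFReal α s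
  rw [this, integral_const_mul, integral_sub_right_eq_self _ α,
    integral_gaussianPDFReal_eq_one 0 one_ne_zero, mul_one]

lemma one_sub_stdNormCDF (z : ℝ) :
    1 - stdNormCDF z = ∫ s in Ioi z, gaussianPDFReal 0 1 s := by
  have := integral_add_compl (measurableSet_Iic (a := z)) (integrable_gaussianPDFReal 0 1)
  rw [compl_Iic] at this
  rw [integral_gaussianPDFReal_eq_one 0 one_ne_zero] at this
  rw [stdNormCDF_eq_integral]
  linarith

lemma integral_exp_mul_gaussian_Ioi (α z : ℝ) :
    ∫ s in Ioi z, Real.exp (α * s) * gaussianPDFReal 0 1 s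
      = Real.exp (α ^ 2 / 2) * (1 - stdNormCDF (z - α)) := by
  have := integral_add_compl (measurableSet_Iic (a := z)) (integrable_exp_mul_gaussian α)
  rw [compl_Iic] at this
  have h := integral_exp_mul_gaussian_Iic α z
  rw [integral_exp_mul_gaussian α] at this
  nlinarith [this, h]

lemma stdNormCDF_tail_bound {α : ℝ} (hα : 0 < α) (z : ℝ) :
    1 - stdNormCDF z ≤ Real.exp (α ^ 2 / 2 - α * z) * (1 - stdNormCDF (z - α)) := by
  rw [one_sub_stdNormCDF]
  have hle : ∫ s in Ioi z, gaussianPDFReal 0 1 s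
      ≤ ∫ s in Ioi z, Real.exp (-(α * z)) * (Real.exp (α * s) * gaussianPDFReal 0 1 s) := by
    refine setIntegral_mono_on (integrable_gaussianPDFReal 0 1).restrict
      (((integrable_exp_mul_gaussian α).const_mul _).restrict) measurableSet_Ioi ?_
    intro s hs
    have h1 : (1 : ℝ) ≤ Real.exp (-(α * z)) * Real.exp (α * s) := by
      rw [← Real.exp_add]
      have : 0 ≤ -(α * z) + α * s := by nlinarith [le_of_lt (mem_Ioi.mp hs)]
      simpa using Real.one_le_exp this
    calc gaussianPDFReal 0 1 s = 1 * gaussianPDFReal 0 1 s := (one_mul _).symm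
      _ ≤ Real.exp (-(α * z)) * Real.exp (α * s) * gaussianPDFReal 0 1 s :=
          mul_le_mul_of_nonneg_right h1 (gaussianPDFReal_nonneg 0 1 s)
      _ = Real.exp (-(α * z)) * (Real.exp (α * s) * gaussianPDFReal 0 1 s) := by ring
  calc ∫ s in Ioi z, gaussianPDFReal 0 1 s
      ≤ ∫ s in Ioi z, Real.exp (-(α * z)) * (Real.exp (α * s) * gaussianPDFReal 0 1 s) := hle
    _ = Real.exp (-(α * z)) * (Real.exp (α ^ 2 / 2) * (1 - stdNormCDF (z - α))) := by
        rw [integral_const_mul, integral_exp_mul_gaussian_Ioi]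
    _ = Real.exp (α ^ 2 / 2 - α * z) * (1 - stdNormCDF (z - α)) := by
        rw [← mul_assoc, ← Real.exp_add]; ring_nf

lemma stdNormCDF_tendsto_one : Tendsto stdNormCDF atTop (nhds 1) := by
  have h := tendsto_measure_Iic_atTop (μ := gaussianReal 0 1)
  rw [measure_univ] at h
  have := (ENNReal.tendsto_toReal (show (1 : ENNReal) ≠ ⊤ by norm_num)).comp h
  exact this

lemma gaussian_singleton (a : ℝ) : gaussianReal 0 1 {a} = 0 :=
  gaussianReal_absolutelyContinuous 0 one_ne_zero (Real.volume_singleton)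

lemma gaussian_Iio (a : ℝ) : gaussianReal 0 1 (Iio a) = gaussianReal 0 1 (Iic a) :=
  measure_congr (Iio_ae_eq_Iic' (gaussian_singleton a))

lemma Iic_eq_iInter (a : ℝ) : Iic a = ⋂ n : ℕ, Iio (a + 1 / (n + 1)) := by
  ext x
  simp only [mem_Iic, mem_iInter, mem_Iio]
  constructor
  · intro h n
    have : (0 : ℝ) < 1 / (n + 1) := by positivity
    linarith
  · intro h
    by_contra hx
    push_neg at hx
    obtain ⟨n, hn⟩ := exists_nat_one_div_lt (by linarith : (0:ℝ) < x - a)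
    have := h n
    linarith [hn]

lemma map_eq_gaussian {Ω : Type*} [MeasurableSpace Ω] (P : Measure Ω) [IsProbabilityMeasure P]
    (Z : Ω → ℝ) (hZmeas : Measurable Z)
    (hZ : ∀ a : ℝ, (P {ω | Z ω < a}).toReal = stdNormCDF a) :
    P.map Z = gaussianReal 0 1 := by
  have hIio : ∀ a : ℝ, P.map Z (Iio a) = gaussianReal 0 1 (Iio a) := by
    intro a
    rw [Measure.map_apply hZmeas measurableSet_Iio, gaussian_Iio]
    have h1 : (P (Z ⁻¹' Iio a)).toReal = (gaussianReal 0 1 (Iic a)).toReal := hZ a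
    exact (ENNReal.toReal_eq_toReal_iff' (measure_ne_top _ _) (measure_ne_top _ _)).mp h1
  haveI : IsProbabilityMeasure (P.map Z) := Measure.isProbabilityMeasure_map hZmeas.aemeasurable
  refine Measure.ext_of_Iic _ _ fun a => ?_
  have key : ∀ (μ : Measure ℝ), IsFiniteMeasure μ →
      Tendsto (fun n : ℕ => μ (Iio (a + 1 / (n + 1)))) atTop (𝓝 (μ (Iic a))) := by
    intro μ hμ
    have := tendsto_measure_iInter_atTop (μ := μ)
      (s := fun n : ℕ => Iio (a + 1 / (n + 1)))
      (fun n => measurableSet_Iio.nullMeasurableSet)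
      (fun m n hmn => by
        apply Iio_subset_Iio
        have : (1 : ℝ) / (n + 1) ≤ 1 / (m + 1) := by
          apply one_div_le_one_div_of_le (by positivity)
          exact_mod_cast by omega
        linarith)
      ⟨0, measure_ne_top _ _⟩
    rw [← Iic_eq_iInter a] at this
    exact this
  have h1 := key (P.map Z) inferInstance
  have h2 := key (gaussianReal 0 1) inferInstance
  have heq : (fun n : ℕ => P.map Z (Iio (a + 1 / (n + 1))))
      = fun n : ℕ => gaussianReal 0 1 (Iio (a + 1 / (n + 1))) := funext fun n => hIio _
  rw [heq] at h1
  exact tendsto_nhds_unique h1 h2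

lemma expMeasure_Iic (v : ℝ) :
    expMeasure 1 (Iic v) = ENNReal.ofReal (if 0 ≤ v then 1 - Real.exp (-v) else 0) := by
  rw [expMeasure, gammaMeasure, withDensity_apply _ measurableSet_Iic]
  have : ∫⁻ y in Iic v, gammaPDF 1 1 y = ∫⁻ y in Iic v, exponentialPDF 1 y := rfl
  rw [this, lintegral_exponentialPDF_eq_antiDeriv one_pos]
  simp

lemma expMeasure_singleton (a : ℝ) : expMeasure 1 {a} = 0 :=
  withDensity_absolutelyContinuous _ _ (Real.volume_singleton)

lemma expMeasure_Iio (t : ℝ) :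
    expMeasure 1 (Iio t) = ENNReal.ofReal (if 0 ≤ t then 1 - Real.exp (-t) else 0) := by
  rw [measure_congr (Iio_ae_eq_Iic' (expMeasure_singleton t)), expMeasure_Iic]

lemma map_eq_exp {Ω : Type*} [MeasurableSpace Ω] (P : Measure Ω) [IsProbabilityMeasure P]
    (V : Ω → ℝ) (hVmeas : Measurable V)
    (hVexp : ∀ v : ℝ, (P {ω | V ω ≤ v}).toReal =
      if 0 ≤ v then 1 - Real.exp (-v) else 0) :
    P.map V = expMeasure 1 := by
  refine Measure.ext_of_Iic _ _ fun a => ?_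
  rw [Measure.map_apply hVmeas measurableSet_Iic, expMeasure_Iic]
  have h1 : (P (V ⁻¹' Iic a)).toReal = if 0 ≤ a then 1 - Real.exp (-a) else 0 := hVexp a
  rw [← h1, ENNReal.ofReal_toReal (measure_ne_top _ _)]

lemma prod_measure_eq {α z : ℝ} (hα : 0 < α) :
    (((gaussianReal 0 1).prod (expMeasure 1)) {p : ℝ × ℝ | p.1 + p.2 / α < z}).toReal
      = stdNormCDF z - Real.exp (α ^ 2 / 2 - α * z) * stdNormCDF (z - α) := by
  haveI : IsProbabilityMeasure (expMeasure 1) := isProbabilityMeasure_expMeasure one_pos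
  have hS : MeasurableSet {p : ℝ × ℝ | p.1 + p.2 / α < z} := by
    apply measurableSet_lt
    · exact (measurable_fst.add (measurable_snd.div_const α))
    · exact measurable_const
  set c : ℝ → ℝ := fun s => if s ≤ z then 1 - Real.exp (-(α * (z - s))) else 0 with hc
  have hcmeas : Measurable c := by
    apply Measurable.ite measurableSet_Iic
    · exact (measurable_const.sub ((measurable_const.mul
        (measurable_const.sub measurable_id)).neg.exp))
    · exact measurable_const
  have hsec : ∀ s : ℝ, expMeasure 1 (Prod.mk s ⁻¹' {p : ℝ × ℝ | p.1 + p.2 / α < z})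
      = ENNReal.ofReal (c s) := by
    intro s
    have hset : Prod.mk s ⁻¹' {p : ℝ × ℝ | p.1 + p.2 / α < z} = Iio (α * (z - s)) := by
      ext v
      simp only [mem_preimage, mem_setOf_eq, mem_Iio]
      constructor
      · intro h
        have h2 : v / α < z - s := by linarith
        calc v = v / α * α := by field_simp
          _ < (z - s) * α := mul_lt_mul_of_pos_right h2 hα
          _ = α * (z - s) := by ring
      · intro h
        have h2 : v / α < z - s := by rw [div_lt_iff₀ hα]; nlinarith
        linarith
    rw [hset, expMeasure_Iio]
    congr 1
    simp only [hc]
    by_cases hsz : s ≤ z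
    · rw [if_pos hsz, if_pos (by nlinarith)]
    · rw [if_neg hsz, if_neg (by push_neg at hsz ⊢; nlinarith)]
  rw [Measure.prod_apply hS]
  have h1 : ∫⁻ s, expMeasure 1 (Prod.mk s ⁻¹' {p : ℝ × ℝ | p.1 + p.2 / α < z})
      ∂(gaussianReal 0 1) = ∫⁻ s, ENNReal.ofReal (c s) ∂(gaussianReal 0 1) := by
    exact lintegral_congr fun s => hsec s
  rw [h1, gaussianReal_of_var_ne_zero 0 one_ne_zero,
    lintegral_withDensity_eq_lintegral_mul _ (measurable_gaussianPDF 0 1)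
      (g := fun s => ENNReal.ofReal (c s)) (ENNReal.measurable_ofReal.comp hcmeas)]
  have h2 : ∀ s : ℝ, (gaussianPDF 0 1 * fun s => ENNReal.ofReal (c s)) s
      = ENNReal.ofReal (gaussianPDFReal 0 1 s * c s) := by
    intro s
    simp only [Pi.mul_apply, gaussianPDF]
    rw [← ENNReal.ofReal_mul (gaussianPDFReal_nonneg 0 1 s)]
  rw [lintegral_congr h2]
  have hcnn : ∀ s, 0 ≤ c s := by
    intro s
    simp only [hc]
    by_cases hsz : s ≤ z
    · rw [if_pos hsz]
      have : Real.exp (-(α * (z - s))) ≤ 1 := Real.exp_le_one_iff.mpr (by nlinarith)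
      linarith
    · rw [if_neg hsz]
  have hcle : ∀ s, c s ≤ 1 := by
    intro s
    simp only [hc]
    by_cases hsz : s ≤ z
    · rw [if_pos hsz]
      have : 0 ≤ Real.exp (-(α * (z - s))) := Real.exp_nonneg _
      linarith
    · rw [if_neg hsz]; norm_num
  have hint : Integrable (fun s => gaussianPDFReal 0 1 s * c s) := by
    refine Integrable.mono (integrable_gaussianPDFReal 0 1)
      (((measurable_gaussianPDFReal 0 1).mul hcmeas).aestronglyMeasurable) ?_
    refine ae_of_all _ fun s => ?_
    rw [Real.norm_eq_abs, Real.norm_eq_abs, abs_of_nonneg (gaussianPDFReal_nonneg 0 1 s),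
      abs_of_nonneg (mul_nonneg (gaussianPDFReal_nonneg 0 1 s) (hcnn s))]
    calc gaussianPDFReal 0 1 s * c s ≤ gaussianPDFReal 0 1 s * 1 :=
        mul_le_mul_of_nonneg_left (hcle s) (gaussianPDFReal_nonneg 0 1 s)
      _ = gaussianPDFReal 0 1 s := mul_one _
  rw [← ofReal_integral_eq_lintegral_ofReal hint
    (ae_of_all _ fun s => mul_nonneg (gaussianPDFReal_nonneg 0 1 s) (hcnn s)),
    ENNReal.toReal_ofReal (integral_nonneg
      fun s => mul_nonneg (gaussianPDFReal_nonneg 0 1 s) (hcnn s))]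
  -- now compute the real integral
  have hind : (fun s => gaussianPDFReal 0 1 s * c s)
      = (Iic z).indicator (fun s => gaussianPDFReal 0 1 s
          - Real.exp (-(α * z)) * (Real.exp (α * s) * gaussianPDFReal 0 1 s)) := by
    funext s
    simp only [hc]
    by_cases hsz : s ≤ z
    · rw [indicator_of_mem (mem_Iic.mpr hsz), if_pos hsz]
      have hexp : rexp (-(α * (z - s))) = rexp (-(α * z)) * rexp (α * s) := by
        rw [← Real.exp_add]; ring_nf
      rw [hexp]; ring
    · rw [indicator_of_notMem (fun h => hsz (mem_Iic.mp h)), if_neg hsz, mul_zero]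
  rw [hind, integral_indicator measurableSet_Iic,
    integral_sub ((integrable_gaussianPDFReal 0 1).restrict)
      (((integrable_exp_mul_gaussian α).const_mul _).restrict),
    integral_const_mul, integral_exp_mul_gaussian_Iic, ← stdNormCDF_eq_integral,
    ← mul_assoc, ← Real.exp_add]
  ring_nf

lemma stdNormCDF_shift_tendsto (α : ℝ) :
    Tendsto (fun z : ℝ => stdNormCDF (z - α)) atTop (nhds 1) :=
  stdNormCDF_tendsto_one.comp (tendsto_atTop_add_const_right atTop (-α) tendsto_id)

end AuxLemmas

/-- For `X = Z + V/α` with `Z` standard normal and `V` unit exponential independent: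
`P(X < z) = Φ(z) - exp(α²/2 - αz) Φ(z - α)`, hence `1 - P(X < z) ~ exp(α²/2 - αz)` as
`z → ∞`, and with `z_n(x) = α/2 + α⁻¹ ln(n/x)` one has
`P(X < z_n(x)) = 1 - x/n + o(1/n)` for every fixed `x > 0`. -/
theorem normal_plus_exponential_tail
    {Ω : Type*} [MeasurableSpace Ω] (P : Measure Ω) [IsProbabilityMeasure P]
    (Z V : Ω → ℝ) (hZmeas : Measurable Z) (hVmeas : Measurable V)
    (α : ℝ) (hα : 0 < α)
    (hZ : ∀ a : ℝ, (P {ω | Z ω < a}).toReal = stdNormCDF a)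
    (hVexp : ∀ v : ℝ, (P {ω | V ω ≤ v}).toReal =
      if 0 ≤ v then 1 - Real.exp (-v) else 0)
    (hindep : IndepFun Z V P)
    (F : ℝ → ℝ) (hF : ∀ z, F z = (P {ω | Z ω + V ω / α < z}).toReal) :
    (∀ z : ℝ, F z = stdNormCDF z -
        Real.exp (α ^ 2 / 2 - α * z) * stdNormCDF (z - α)) ∧
    Tendsto (fun z : ℝ => (1 - F z) / Real.exp (α ^ 2 / 2 - α * z)) atTop (nhds 1) ∧
    (∀ x : ℝ, 0 < x →
      (fun n : ℕ => F (α / 2 + α⁻¹ * Real.log ((n : ℝ) / x)) - (1 - x / (n : ℝ)))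
        =o[atTop] fun n : ℕ => 1 / (n : ℝ)) := by
  have hmapZ := map_eq_gaussian P Z hZmeas hZ
  have hmapV := map_eq_exp P V hVmeas hVexp
  have hprod : P.map (fun ω => (Z ω, V ω)) = (gaussianReal 0 1).prod (expMeasure 1) := by
    rw [← hmapZ, ← hmapV]
    exact (indepFun_iff_map_prod_eq_prod_map_map hZmeas.aemeasurable hVmeas.aemeasurable).mp
      hindep
  have hFz : ∀ z, F z = stdNormCDF z -
      Real.exp (α ^ 2 / 2 - α * z) * stdNormCDF (z - α) := by
    intro z
    rw [hF z]
    have hS : MeasurableSet {p : ℝ × ℝ | p.1 + p.2 / α < z} :=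
      measurableSet_lt (measurable_fst.add (measurable_snd.div_const α)) measurable_const
    have hkey : P {ω | Z ω + V ω / α < z}
        = ((gaussianReal 0 1).prod (expMeasure 1)) {p : ℝ × ℝ | p.1 + p.2 / α < z} := by
      rw [← hprod, Measure.map_apply (hZmeas.prodMk hVmeas) hS]
      rfl
    rw [hkey, prod_measure_eq hα]
  refine ⟨hFz, ?_, ?_⟩
  · -- part 2
    have hE : ∀ z : ℝ, 0 < Real.exp (α ^ 2 / 2 - α * z) := fun z => Real.exp_pos _
    have htail0 : Tendsto (fun z : ℝ => 1 - stdNormCDF (z - α)) atTop (nhds 0) := by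
      have := (stdNormCDF_shift_tendsto α).const_sub 1
      simpa using this
    have key2 : Tendsto
        (fun z : ℝ => (1 - stdNormCDF z) / Real.exp (α ^ 2 / 2 - α * z)) atTop (nhds 0) := by
      refine tendsto_of_tendsto_of_tendsto_of_le_of_le tendsto_const_nhds htail0
        (fun z => ?_) (fun z => ?_)
      · exact div_nonneg (by linarith [stdNormCDF_le_one z]) (hE z).le
      · rw [div_le_iff₀ (hE z)]
        have := stdNormCDF_tail_bound hα z
        linarith [this, mul_comm (Real.exp (α ^ 2 / 2 - α * z)) (1 - stdNormCDF (z - α))]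
    have heqfun : (fun z : ℝ => (1 - F z) / Real.exp (α ^ 2 / 2 - α * z))
        = fun z : ℝ => (1 - stdNormCDF z) / Real.exp (α ^ 2 / 2 - α * z)
            + stdNormCDF (z - α) := by
      funext z
      rw [hFz z]
      field_simp
      ring
    rw [heqfun]
    have := key2.add (stdNormCDF_shift_tendsto α)
    simpa using this
  · -- part 3
    intro x hx
    set zn : ℕ → ℝ := fun n => α / 2 + α⁻¹ * Real.log ((n : ℝ) / x) with hzn_def
    have hzn : Tendsto zn atTop atTop := by
      apply tendsto_atTop_add_const_left
      apply Tendsto.const_mul_atTop (inv_pos.mpr hα)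
      exact Real.tendsto_log_atTop.comp (tendsto_natCast_atTop_atTop.atTop_div_const hx)
    have hEn : ∀ n : ℕ, 1 ≤ n → Real.exp (α ^ 2 / 2 - α * zn n) = x / n := by
      intro n hn
      have hn0 : (0 : ℝ) < (n : ℝ) := by exact_mod_cast hn
      have hnx : 0 < (n : ℝ) / x := div_pos hn0 hx
      have hmul : α * zn n = α ^ 2 / 2 + Real.log ((n : ℝ) / x) := by
        simp only [hzn_def]
        field_simp
      rw [hmul]
      have : α ^ 2 / 2 - (α ^ 2 / 2 + Real.log ((n : ℝ) / x))
          = -Real.log ((n : ℝ) / x) := by ring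
      rw [this, Real.exp_neg, Real.exp_log hnx, inv_div]
    have htail0 : Tendsto (fun n : ℕ => 1 - stdNormCDF (zn n - α)) atTop (nhds 0) := by
      have h1 := ((stdNormCDF_shift_tendsto α).const_sub 1).comp hzn
      simpa [Function.comp_def] using h1
    have hxtail : Tendsto (fun n : ℕ => x * (1 - stdNormCDF (zn n - α))) atTop (nhds 0) := by
      have := htail0.const_mul x
      simpa using this
    have hnn : Tendsto (fun n : ℕ => (n : ℝ) * (1 - stdNormCDF (zn n))) atTop (nhds 0) := by
      refine tendsto_of_tendsto_of_tendsto_of_le_of_le' tendsto_const_nhds hxtail ?_ ?_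
      · filter_upwards with n
        exact mul_nonneg (Nat.cast_nonneg n) (by linarith [stdNormCDF_le_one (zn n)])
      · filter_upwards [eventually_ge_atTop 1] with n hn
        have hn0 : (0 : ℝ) < (n : ℝ) := by exact_mod_cast hn
        have hb := stdNormCDF_tail_bound hα (zn n)
        have := mul_le_mul_of_nonneg_left hb hn0.le
        rw [hEn n hn] at this
        calc (n : ℝ) * (1 - stdNormCDF (zn n))
            ≤ (n : ℝ) * (x / n * (1 - stdNormCDF (zn n - α))) := this
          _ = x * (1 - stdNormCDF (zn n - α)) := by field_simp
    have hg : Tendsto (fun n : ℕ => -((n : ℝ) * (1 - stdNormCDF (zn n)))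
        + x * (1 - stdNormCDF (zn n - α))) atTop (nhds 0) := by
      have := hnn.neg.add hxtail
      simpa using this
    rw [Asymptotics.isLittleO_iff_tendsto']
    · apply hg.congr'
      filter_upwards [eventually_ge_atTop 1] with n hn
      have hn0 : ((n : ℝ)) ≠ 0 := by
        have : (0 : ℝ) < (n : ℝ) := by exact_mod_cast hn
        exact this.ne'
      rw [hFz (zn n), hEn n hn]
      field_simp
      ring
    · filter_upwards [eventually_ge_atTop 1] with n hn h
      have hn0 : ((n : ℝ)) ≠ 0 := by
        have : (0 : ℝ) < (n : ℝ) := by exact_mod_cast hn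
        exact this.ne'
      exact absurd h (by simp [hn0])
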